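/- Let 1 ≤ β ≤ γ with βγ > 1 and 0 < λ ≤ (γ−1)/(β−1) (interpreting the bound as +∞ when β = 1). For any finite graph G with external fields π(v) ≤ λ at every vertex, the marginal probability p_v that any vertex v is assigned spin 0 in the Gibbs measure satisfies p_v ≤ λ/(λ+1). -/

import Mathlib

open Finset

namespace TwoSpinAux

variable {V : Type*} [Fintype V] [DecidableEq V]

/-- edge factor -/
def ef (β γ : ℝ) (σ : V → Bool) (p : V × V) : ℝ :=
  if σ p.1 = false ∧ σ p.2 = false then β
  else if σ p.1 = true ∧ σ p.2 = true then γ else 1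

/-- field factor -/
def fld (π : V → ℝ) (σ : V → Bool) : ℝ :=
  ∏ u ∈ Finset.univ.filter (fun u => σ u = false), π u

/-- weight of a configuration -/
def W (β γ : ℝ) (π : V → ℝ) (L : List (V × V)) (σ : V → Bool) : ℝ :=
  (L.map (ef β γ σ)).prod * fld π σ

def flipE (b : V) : (V → Bool) ≃ (V → Bool) where
  toFun σ := Function.update σ b (!σ b)
  invFun σ := Function.update σ b (!σ b)
  left_inv σ := by
    funext u
    rcases eq_or_ne u b with rfl | h
    · simp
    · simp [Function.update_of_ne h]
  right_inv σ := by
    funext u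
    rcases eq_or_ne u b with rfl | h
    · simp
    · simp [Function.update_of_ne h]

lemma flip_sum (b : V) (f : (V → Bool) → ℝ) :
    (∑ σ : V → Bool, if σ b = false then f σ else 0)
      = ∑ σ : V → Bool, if σ b = true then f (Function.update σ b false) else 0 := by
  apply Fintype.sum_equiv (flipE b)
  intro σ
  cases h : σ b
  · have e1 : Function.update σ b (!σ b) = Function.update σ b true := by rw [h]; rfl
    have e2 : Function.update σ b false = σ := by
      funext u
      rcases eq_or_ne u b with rfl | hu
      · simp [h]
      · simp [Function.update_of_ne hu]
    simp [flipE, e1, Function.update_idem, e2, h]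
  · have e1 : Function.update σ b (!σ b) = Function.update σ b false := by rw [h]; rfl
    simp [flipE, e1, h, Function.update_idem]

lemma sum_split (b : V) (f : (V → Bool) → ℝ) :
    (∑ σ : V → Bool, f σ)
      = ∑ σ : V → Bool, if σ b = true then f σ + f (Function.update σ b false) else 0 := by
  have h1 : (∑ σ : V → Bool, f σ)
      = (∑ σ : V → Bool, if σ b = true then f σ else 0)
        + ∑ σ : V → Bool, if σ b = false then f σ else 0 := by
    rw [← Finset.sum_add_distrib]
    exact Finset.sum_congr rfl fun σ _ => by cases h : σ b <;> simp [h]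
  rw [h1, flip_sum, ← Finset.sum_add_distrib]
  exact Finset.sum_congr rfl fun σ _ => by cases h : σ b <;> simp [h]


lemma fld_congr {π π' : V → ℝ} (σ : V → Bool) (h : ∀ u, σ u = false → π' u = π u) :
    fld π' σ = fld π σ :=
  Finset.prod_congr rfl fun u hu => h u (by simpa using hu)

lemma fld_eq_mul {π : V → ℝ} {σ : V → Bool} {a : V} (ha : σ a = false) :
    fld π σ = π a * ∏ u ∈ (Finset.univ.filter (fun u => σ u = false)) \ {a}, π u := by
  rw [fld, ← Finset.mul_prod_erase _ _ (show a ∈ _ by simp [ha]), Finset.sdiff_singleton_eq_erase]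

lemma fld_update {π : V → ℝ} {σ : V → Bool} {a : V} (ha : σ a = false) (c : ℝ) :
    fld (Function.update π a c) σ
      = c * ∏ u ∈ (Finset.univ.filter (fun u => σ u = false)) \ {a}, π u := by
  rw [fld, Finset.prod_update_of_mem (show a ∈ _ by simp [ha])]

lemma fld_flip {π : V → ℝ} {σ : V → Bool} {b : V} (hb : σ b = true) :
    fld π (Function.update σ b false) = π b * fld π σ := by
  have hset : Finset.univ.filter (fun u => Function.update σ b false u = false)
      = insert b (Finset.univ.filter (fun u => σ u = false)) := by
    ext u
    rcases eq_or_ne u b with rfl | hu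
    · simp
    · simp [Function.update_of_ne hu, hu]
  rw [fld, hset, Finset.prod_insert (by simp [hb]), fld]

lemma ef_swap (β γ : ℝ) (σ : V → Bool) (a b : V) :
    ef β γ σ (a, b) = ef β γ σ (b, a) := by
  simp only [ef, and_comm]

lemma W_cons (β γ : ℝ) (π : V → ℝ) (p : V × V) (L : List (V × V)) (σ : V → Bool) :
    W β γ π (p :: L) σ = ef β γ σ p * W β γ π L σ := by
  simp [W, mul_assoc]

lemma edge_subst (β γ : ℝ) (a b : V) (L : List (V × V)) (σ : V → Bool) :
    ((L.map (fun p : V × V =>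
        ((if p.1 = b then a else p.1), (if p.2 = b then a else p.2)))).map (ef β γ σ)).prod
      = (L.map (ef β γ (Function.update σ b (σ a)))).prod := by
  rw [List.map_map]
  congr 1
  apply List.map_congr_left
  intro p _
  have key : ∀ x : V, σ (if x = b then a else x) = Function.update σ b (σ a) x := by
    intro x
    rcases eq_or_ne x b with rfl | hx
    · simp
    · simp [hx, Function.update_of_ne hx]
  simp only [Function.comp_apply, ef, key]

lemma edge_indep (β γ : ℝ) (L : List (V × V)) (σ σ' : V → Bool)
    (h : ∀ p ∈ L, σ p.1 = σ' p.1 ∧ σ p.2 = σ' p.2) :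
    (L.map (ef β γ σ)).prod = (L.map (ef β γ σ')).prod := by
  congr 1
  apply List.map_congr_left
  intro p hp
  simp only [ef, (h p hp).1, (h p hp).2]


lemma loop_W (β γ : ℝ) (hγ : γ ≠ 1) (π : V → ℝ) (a : V) (L : List (V × V)) (σ : V → Bool) :
    W β γ π ((a, a) :: L) σ
      = W β γ π L σ
        + (γ - 1) * W β γ (Function.update π a (π a * ((β - 1) / (γ - 1)))) L σ := by
  have hγ' : γ - 1 ≠ 0 := sub_ne_zero.mpr hγ
  rw [W_cons]
  cases h : σ a
  · have h1 := fld_eq_mul (π := π) h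
    have h2 := fld_update (π := π) h (π a * ((β - 1) / (γ - 1)))
    simp only [W, ef, h, and_self]
    rw [h1, h2]
    norm_num
    field_simp
    ring
  · have h2 : fld (Function.update π a (π a * ((β - 1) / (γ - 1)))) σ = fld π σ := by
      apply fld_congr
      intro u hu
      have : u ≠ a := fun he => by rw [he, h] at hu; exact Bool.true_eq_false.mp hu
      exact Function.update_of_ne this _ _
    simp only [W, ef, h, and_self]
    rw [h2]
    norm_num
    ring


lemma master (β γ lam : ℝ) (hγ : γ ≠ 1) (hlam : (1:ℝ) + lam ≠ 0)
    (a b : V) (hab : a ≠ b) (L : List (V × V)) (π : V → ℝ)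
    (φ : (V → Bool) → ℝ) (hφ : ∀ σ x, φ (Function.update σ b x) = φ σ) :
    ∑ σ : V → Bool, φ σ * W β γ π ((a, b) :: L) σ
      = (∑ σ : V → Bool, φ σ * W β γ π L σ)
        + ((γ - 1) / (1 + lam)) *
          ∑ σ : V → Bool, φ σ *
            W β γ (Function.update (Function.update π b lam) a (π a * π b * ((β - 1) / (γ - 1))))
              (L.map (fun p : V × V =>
                ((if p.1 = b then a else p.1), (if p.2 = b then a else p.2)))) σ := by
  have hγ' : γ - 1 ≠ 0 := sub_ne_zero.mpr hγ
  set μ : ℝ := π a * π b * ((β - 1) / (γ - 1)) with hμ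
  set π'' : V → ℝ := Function.update (Function.update π b lam) a μ with hπ''
  set L'' : List (V × V) := L.map (fun p : V × V =>
      ((if p.1 = b then a else p.1), (if p.2 = b then a else p.2))) with hL''
  have hπ''b : π'' b = lam := by
    rw [hπ'', Function.update_of_ne (Ne.symm hab), Function.update_self]
  have hπ''other : ∀ u, u ≠ a → u ≠ b → π'' u = π u := by
    intro u hua hub
    rw [hπ'', Function.update_of_ne hua, Function.update_of_ne hub]
  have hL''b : ∀ p ∈ L'', p.1 ≠ b ∧ p.2 ≠ b := by
    intro p hp
    rw [hL''] at hp
    obtain ⟨q, _, rfl⟩ := List.mem_map.mp hp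
    constructor
    · dsimp only; split <;> [exact hab; assumption]
    · dsimp only; split <;> [exact hab; assumption]
  set A0 : ℝ := ∑ σ : V → Bool,
      if σ b = false ∧ σ a = false then φ σ * W β γ π L σ else 0 with hA0
  set A1 : ℝ := ∑ σ : V → Bool,
      if σ b = true ∧ σ a = true then φ σ * W β γ π L σ else 0 with hA1
  -- Step 1
  have step1 : ∑ σ : V → Bool, φ σ * W β γ π ((a, b) :: L) σ
      = (∑ σ : V → Bool, φ σ * W β γ π L σ) + (β - 1) * A0 + (γ - 1) * A1 := by
    rw [hA0, hA1, Finset.mul_sum, Finset.mul_sum, ← Finset.sum_add_distrib,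
      ← Finset.sum_add_distrib]
    apply Finset.sum_congr rfl
    intro σ _
    rw [W_cons]
    simp only [ef]
    cases ha : σ a <;> cases hb2 : σ b <;> simp [ha, hb2] <;> ring
  -- Step 2 : pointwise values of W''
  have hWtt : ∀ σ : V → Bool, σ b = true → σ a = true →
      W β γ π'' L'' σ = W β γ π L σ := by
    intro σ hb2 ha
    have hupd : Function.update σ b (σ a) = σ := by
      rw [ha, ← hb2]; exact Function.update_eq_self b σ
    have hedge : (L''.map (ef β γ σ)).prod = (L.map (ef β γ σ)).prod := by
      rw [hL'', edge_subst, hupd]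
    have hfld : fld π'' σ = fld π σ := by
      apply fld_congr
      intro u hu
      have hua : u ≠ a := fun he => by rw [he, ha] at hu; exact Bool.true_eq_false.mp hu
      have hub : u ≠ b := fun he => by rw [he, hb2] at hu; exact Bool.true_eq_false.mp hu
      exact hπ''other u hua hub
    rw [W, W, hedge, hfld]
  have hWtf : ∀ σ : V → Bool, σ b = true → σ a = false →
      W β γ π'' L'' σ = ((β - 1) / (γ - 1)) * W β γ π L (Function.update σ b false) := by
    intro σ hb2 ha
    have hedge : (L''.map (ef β γ σ)).prod
        = (L.map (ef β γ (Function.update σ b false))).prod := by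
      rw [hL'', edge_subst, ha]
    have hfld1 : fld π'' σ
        = μ * ∏ u ∈ (Finset.univ.filter (fun u => σ u = false)) \ {a},
            (Function.update π b lam) u := fld_update ha μ
    have hfld2 : ∏ u ∈ (Finset.univ.filter (fun u => σ u = false)) \ {a},
        (Function.update π b lam) u
        = ∏ u ∈ (Finset.univ.filter (fun u => σ u = false)) \ {a}, π u := by
      apply Finset.prod_congr rfl
      intro u hu
      have hub : u ≠ b := by
        intro he
        have : σ u = false := by simpa using (Finset.mem_sdiff.mp hu).1
        rw [he, hb2] at this; exact Bool.true_eq_false.mp this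
      exact Function.update_of_ne hub _ _
    have hfld3 : fld π (Function.update σ b false)
        = π b * (π a * ∏ u ∈ (Finset.univ.filter (fun u => σ u = false)) \ {a}, π u) := by
      rw [fld_flip hb2, fld_eq_mul ha]
    rw [W, W, hedge, hfld1, hfld2, hfld3, hμ]
    ring
  -- W'' does not depend on the value at b, up to the field lam
  have hWflip : ∀ σ : V → Bool, σ b = true →
      W β γ π'' L'' (Function.update σ b false) = lam * W β γ π'' L'' σ := by
    intro σ hb2
    have hedge : (L''.map (ef β γ (Function.update σ b false))).prod
        = (L''.map (ef β γ σ)).prod := by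
      apply edge_indep
      intro p hp
      exact ⟨Function.update_of_ne (hL''b p hp).1 _ _,
        Function.update_of_ne (hL''b p hp).2 _ _⟩
    rw [W, W, hedge, fld_flip (π := π'') hb2, hπ''b]
    ring
  -- Step 2
  have step2 : ∑ σ : V → Bool, φ σ * W β γ π'' L'' σ
      = (1 + lam) * (A1 + ((β - 1) / (γ - 1)) * A0) := by
    rw [sum_split b (fun σ => φ σ * W β γ π'' L'' σ)]
    have e1 : ∀ σ : V → Bool,
        (if σ b = true then φ σ * W β γ π'' L'' σ
            + φ (Function.update σ b false) * W β γ π'' L'' (Function.update σ b false)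
          else 0)
        = (1 + lam) * (if σ b = true then φ σ * W β γ π'' L'' σ else 0) := by
      intro σ
      cases hb2 : σ b
      · simp
      · rw [if_pos rfl, if_pos rfl, hφ, hWflip σ hb2]; ring
    rw [Finset.sum_congr rfl fun σ _ => e1 σ, ← Finset.mul_sum]
    congr 1
    -- split on σ a
    have e2 : ∀ σ : V → Bool,
        (if σ b = true then φ σ * W β γ π'' L'' σ else 0)
        = (if σ b = true ∧ σ a = true then φ σ * W β γ π L σ else 0)
          + ((β - 1) / (γ - 1)) *
            (if σ b = true ∧ σ a = false then
              φ σ * W β γ π L (Function.update σ b false) else 0) := by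
      intro σ
      cases hb2 : σ b
      · simp
      · cases ha : σ a
        · simp only [hWtf σ hb2 ha, hb2, ha]
          simp
          ring
        · simp only [hWtt σ hb2 ha, hb2, ha]
          simp
    rw [Finset.sum_congr rfl fun σ _ => e2 σ, Finset.sum_add_distrib, ← Finset.mul_sum]
    -- reindex the second sum
    have e3 : (∑ σ : V → Bool,
        if σ b = true ∧ σ a = false then φ σ * W β γ π L (Function.update σ b false) else 0)
        = A0 := by
      have := flip_sum b (fun σ => if σ a = false then φ σ * W β γ π L σ else 0)
      rw [hA0]
      rw [show (∑ σ : V → Bool,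
          if σ b = false ∧ σ a = false then φ σ * W β γ π L σ else 0)
          = ∑ σ : V → Bool,
            if σ b = false then (if σ a = false then φ σ * W β γ π L σ else 0) else 0 by
        apply Finset.sum_congr rfl; intro σ _
        cases hb2 : σ b <;> cases ha : σ a <;> simp [hb2, ha]]
      rw [this]
      apply Finset.sum_congr rfl
      intro σ _
      cases hb2 : σ b
      · simp [hb2]
      · rw [if_pos rfl, Function.update_of_ne hab, hφ]
        cases ha : σ a <;> simp [hb2, ha]
    rw [e3, hA1]
  rw [step1, step2]
  field_simp
  ring


lemma contract (β γ lam : ℝ) (hβ : 1 ≤ β) (hγ : 1 < γ) (hlam : 0 < lam)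
    (hb : lam * (β - 1) ≤ γ - 1) (a b : V) (hab : a ≠ b) (L : List (V × V)) (π : V → ℝ)
    (hπ : ∀ u, 0 ≤ π u ∧ π u ≤ lam) (v : V) (hvb : v ≠ b)
    (IH : ∀ (L₂ : List (V × V)), L₂.length = L.length → ∀ π₂ : V → ℝ,
        (∀ u, 0 ≤ π₂ u ∧ π₂ u ≤ lam) → ∀ w : V,
        (∑ σ : V → Bool, if σ w = false then W β γ π₂ L₂ σ else 0)
          ≤ (lam / (lam + 1)) * ∑ σ : V → Bool, W β γ π₂ L₂ σ) :
    (∑ σ : V → Bool, if σ v = false then W β γ π ((a, b) :: L) σ else 0)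
      ≤ (lam / (lam + 1)) * ∑ σ : V → Bool, W β γ π ((a, b) :: L) σ := by
  have hγ1 : γ ≠ 1 := ne_of_gt hγ
  have hlam1 : (1 : ℝ) + lam ≠ 0 := by positivity
  have hμ0 : 0 ≤ π a * π b * ((β - 1) / (γ - 1)) :=
    mul_nonneg (mul_nonneg (hπ a).1 (hπ b).1)
      (div_nonneg (by linarith) (by linarith))
  have hμlam : π a * π b * ((β - 1) / (γ - 1)) ≤ lam := by
    rw [mul_div_assoc']
    rw [div_le_iff₀ (by linarith : (0:ℝ) < γ - 1)]
    have h1 : π a * π b ≤ lam * lam :=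
      mul_le_mul (hπ a).2 (hπ b).2 (hπ b).1 (by linarith)
    nlinarith [mul_le_mul_of_nonneg_right h1 (by linarith : (0:ℝ) ≤ β - 1),
      mul_le_mul_of_nonneg_left hb (le_of_lt hlam)]
  have hπ'' : ∀ u, 0 ≤ Function.update (Function.update π b lam) a
        (π a * π b * ((β - 1) / (γ - 1))) u ∧
      Function.update (Function.update π b lam) a
        (π a * π b * ((β - 1) / (γ - 1))) u ≤ lam := by
    intro u
    rcases eq_or_ne u a with rfl | hua
    · rw [Function.update_self]
      exact ⟨hμ0, hμlam⟩
    · rw [Function.update_of_ne hua]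
      rcases eq_or_ne u b with rfl | hub
      · rw [Function.update_self]
        exact ⟨le_of_lt hlam, le_refl _⟩
      · rw [Function.update_of_ne hub]
        exact hπ u
  have hZ := master β γ lam hγ1 hlam1 a b hab L π (fun _ => 1) (fun _ _ => rfl)
  simp only [one_mul] at hZ
  have hN := master β γ lam hγ1 hlam1 a b hab L π
      (fun σ => if σ v = false then 1 else 0)
      (fun σ x => by simp [Function.update_of_ne hvb])
  have hconv : ∀ (π₀ : V → ℝ) (L₀ : List (V × V)),
      (∑ σ : V → Bool, (if σ v = false then (1:ℝ) else 0) * W β γ π₀ L₀ σ)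
        = ∑ σ : V → Bool, if σ v = false then W β γ π₀ L₀ σ else 0 := by
    intro π₀ L₀
    apply Finset.sum_congr rfl
    intro σ _
    cases h : σ v <;> simp [h]
  simp only [hconv] at hN
  rw [hN, hZ]
  have hc : 0 ≤ (γ - 1) / (1 + lam) := div_nonneg (by linarith) (by linarith)
  have h1 := IH L rfl π hπ v
  have h2 := IH (L.map (fun p : V × V =>
      ((if p.1 = b then a else p.1), (if p.2 = b then a else p.2))))
    (by simp) (Function.update (Function.update π b lam) a
      (π a * π b * ((β - 1) / (γ - 1)))) hπ'' v
  nlinarith [mul_le_mul_of_nonneg_left h2 hc]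


lemma main (β γ lam : ℝ) (hβ : 1 ≤ β) (hle : β ≤ γ) (hγ : 1 < γ) (hlam : 0 < lam)
    (hb : lam * (β - 1) ≤ γ - 1) :
    ∀ (n : ℕ) (L : List (V × V)), L.length = n → ∀ π : V → ℝ,
      (∀ u, 0 ≤ π u ∧ π u ≤ lam) → ∀ v : V,
      (∑ σ : V → Bool, if σ v = false then W β γ π L σ else 0)
        ≤ (lam / (lam + 1)) * ∑ σ : V → Bool, W β γ π L σ := by
  intro n
  induction n with
  | zero =>
    intro L hL π hπ v
    rw [List.length_eq_zero_iff] at hL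
    subst hL
    rw [sum_split v (fun σ => if σ v = false then W β γ π [] σ else 0),
      sum_split v (fun σ => W β γ π [] σ), Finset.mul_sum]
    apply Finset.sum_le_sum
    intro σ _
    cases hv : σ v
    · simp [hv]
    · have hupd : Function.update σ v false v = false := Function.update_self v false σ
      rw [if_pos rfl, if_pos rfl, if_neg (by simp [hv]), if_pos hupd, zero_add]
      have hW1 : W β γ π [] (Function.update σ v false) = π v * fld π σ := by
        rw [W]
        simp only [List.map_nil, List.prod_nil, one_mul]
        exact fld_flip hv
      have hW2 : W β γ π [] σ = fld π σ := by
        rw [W]; simp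
      rw [hW1, hW2]
      have hF : 0 ≤ fld π σ := Finset.prod_nonneg fun u _ => (hπ u).1
      rw [div_mul_eq_mul_div, le_div_iff₀ (by linarith : (0:ℝ) < lam + 1)]
      nlinarith [mul_le_mul_of_nonneg_right (hπ v).2 hF]
  | succ n ih =>
    intro L hL π hπ v
    match L, hL with
    | (a, b) :: L', hL =>
      have hlen : L'.length = n := by simpa using hL
      by_cases hab : a = b
      · -- loop case
        subst hab
        have hγ1 : γ ≠ 1 := ne_of_gt hγ
        set π₂ : V → ℝ := Function.update π a (π a * ((β - 1) / (γ - 1))) with hπ₂def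
        have hπ₂ : ∀ u, 0 ≤ π₂ u ∧ π₂ u ≤ lam := by
          intro u
          rcases eq_or_ne u a with rfl | hu
          · rw [hπ₂def, Function.update_self]
            have hr0 : (0:ℝ) ≤ (β - 1) / (γ - 1) :=
              div_nonneg (by linarith) (by linarith)
            have hr1 : (β - 1) / (γ - 1) ≤ 1 := by
              rw [div_le_one (by linarith : (0:ℝ) < γ - 1)]; linarith
            constructor
            · exact mul_nonneg (hπ _).1 hr0
            · calc π _ * ((β - 1) / (γ - 1)) ≤ π _ * 1 :=
                    mul_le_mul_of_nonneg_left hr1 (hπ _).1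
                _ = π _ := mul_one _
                _ ≤ lam := (hπ _).2
          · rw [hπ₂def, Function.update_of_ne hu]
            exact hπ u
        have hZ : (∑ σ : V → Bool, W β γ π ((a, a) :: L') σ)
            = (∑ σ : V → Bool, W β γ π L' σ)
              + (γ - 1) * ∑ σ : V → Bool, W β γ π₂ L' σ := by
          rw [Finset.mul_sum, ← Finset.sum_add_distrib]
          exact Finset.sum_congr rfl fun σ _ => loop_W β γ hγ1 π a L' σ
        have hN : (∑ σ : V → Bool, if σ v = false then W β γ π ((a, a) :: L') σ else 0)
            = (∑ σ : V → Bool, if σ v = false then W β γ π L' σ else 0)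
              + (γ - 1) * ∑ σ : V → Bool, if σ v = false then W β γ π₂ L' σ else 0 := by
          rw [Finset.mul_sum, ← Finset.sum_add_distrib]
          apply Finset.sum_congr rfl
          intro σ _
          cases hv : σ v
          · simp [hv, loop_W β γ hγ1 π a L' σ]; exact Or.inl rfl
          · simp [hv]
        rw [hN, hZ]
        have h1 := ih L' hlen π hπ v
        have h2 := ih L' hlen π₂ hπ₂ v
        have hc : (0:ℝ) ≤ γ - 1 := by linarith
        nlinarith [mul_le_mul_of_nonneg_left h2 hc]
      · -- non-loop case
        by_cases hvb : v = b
        · -- swap the edge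
          have hswap : ∀ σ : V → Bool,
              W β γ π ((a, b) :: L') σ = W β γ π ((b, a) :: L') σ := by
            intro σ
            rw [W_cons, W_cons, ef_swap]
          simp only [hswap]
          exact contract β γ lam hβ hγ hlam hb b a (Ne.symm hab) L' π hπ v
            (fun h => hab (h.symm.trans hvb)) (fun L₂ hL₂ => ih L₂ (hL₂.trans hlen))
        · exact contract β γ lam hβ hγ hlam hb a b hab L' π hπ v hvb
            (fun L₂ hL₂ => ih L₂ (hL₂.trans hlen))


lemma ef_nonneg {β γ : ℝ} (hβ : 0 < β) (hγ : 0 < γ) (σ : V → Bool) (p : V × V) :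
    0 ≤ ef β γ σ p := by
  rw [ef]
  split
  · exact le_of_lt hβ
  · split
    · exact le_of_lt hγ
    · exact zero_le_one

lemma W_nonneg {β γ : ℝ} (hβ : 0 < β) (hγ : 0 < γ) (π : V → ℝ) (hπ : ∀ u, 0 ≤ π u)
    (L : List (V × V)) (σ : V → Bool) : 0 ≤ W β γ π L σ := by
  induction L with
  | nil => simpa [W, fld] using Finset.prod_nonneg fun u _ => hπ u
  | cons p L ih =>
    rw [W_cons]
    exact mul_nonneg (ef_nonneg hβ hγ σ p) ih

lemma W_true_pos {β γ : ℝ} (hβ : 0 < β) (hγ : 0 < γ) (π : V → ℝ) (L : List (V × V)) :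
    0 < W β γ π L (fun _ => true) := by
  induction L with
  | nil =>
    have : (Finset.univ.filter (fun u : V => (true : Bool) = false)) = ∅ := by simp
    simp [W, fld, this]
  | cons p L ih =>
    rw [W_cons]
    apply mul_pos _ ih
    simp [ef]
    exact hγ

lemma Z_pos {β γ : ℝ} (hβ : 0 < β) (hγ : 0 < γ) (π : V → ℝ) (hπ : ∀ u, 0 ≤ π u)
    (L : List (V × V)) : 0 < ∑ σ : V → Bool, W β γ π L σ := by
  apply Finset.sum_pos' (fun σ _ => W_nonneg hβ hγ π hπ L σ)
  exact ⟨fun _ => true, Finset.mem_univ _, W_true_pos hβ hγ π L⟩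


open scoped Classical in
lemma weight_eq (G : SimpleGraph V) (β γ : ℝ) (π : V → ℝ) (σ : V → Bool) :
    β ^ ((Finset.univ.filter fun e : Sym2 V =>
          e ∈ G.edgeSet ∧ ∀ u ∈ e, σ u = false).card) *
      γ ^ ((Finset.univ.filter fun e : Sym2 V =>
          e ∈ G.edgeSet ∧ ∀ u ∈ e, σ u = true).card) *
      ∏ u ∈ Finset.univ.filter fun u => σ u = false, π u
    = W β γ π (((Finset.univ.filter fun e : Sym2 V => e ∈ G.edgeSet)).toList.map
        Quot.out) σ := by
  set F := Finset.univ.filter fun e : Sym2 V => e ∈ G.edgeSet with hF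
  have hmem : ∀ (e : Sym2 V) (c : Bool),
      (∀ u ∈ e, σ u = c) ↔ (σ e.out.1 = c ∧ σ e.out.2 = c) := by
    intro e c
    conv_lhs => rw [← e.out_eq]
    exact Sym2.ball
  have hfilter : ∀ c : Bool,
      (Finset.univ.filter fun e : Sym2 V => e ∈ G.edgeSet ∧ ∀ u ∈ e, σ u = c)
        = F.filter (fun e => σ e.out.1 = c ∧ σ e.out.2 = c) := by
    intro c
    rw [hF, Finset.filter_filter]
    exact Finset.filter_congr (fun e _ => by rw [hmem e c])
  have hW : W β γ π (F.toList.map Quot.out) σ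
      = (∏ e ∈ F, ef β γ σ e.out) * fld π σ := by
    rw [W, List.map_map]
    congr 1
    exact Finset.prod_map_toList F (fun e => ef β γ σ e.out)
  have hsplit : (∏ e ∈ F, ef β γ σ e.out)
      = β ^ (F.filter (fun e => σ e.out.1 = false ∧ σ e.out.2 = false)).card *
        γ ^ (F.filter (fun e => σ e.out.1 = true ∧ σ e.out.2 = true)).card := by
    have h1 : (∏ e ∈ F, ef β γ σ e.out)
        = ∏ e ∈ F, (if σ e.out.1 = false ∧ σ e.out.2 = false then β
            else if σ e.out.1 = true ∧ σ e.out.2 = true then γ else 1) := rfl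
    rw [h1, Finset.prod_ite, Finset.prod_const]
    congr 1
    rw [Finset.prod_ite, Finset.prod_const, Finset.prod_const_one, mul_one]
    congr 2
    rw [Finset.filter_filter]
    apply Finset.filter_congr
    intro e _
    constructor
    · exact fun h => h.2
    · intro h
      refine ⟨fun hcon => ?_, h⟩
      rw [hcon.1] at h
      exact Bool.true_eq_false.mp h.1.symm
  rw [hW, hsplit, hfilter false, hfilter true, fld]

end TwoSpinAux

open scoped Classical in
theorem stmt_14 {V : Type*} [Fintype V] [DecidableEq V] (G : SimpleGraph V)
    (β γ lam : ℝ) (hβ : 1 ≤ β) (hle : β ≤ γ) (h1 : 1 < β * γ) (hlam : 0 < lam)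
    (hbound : β = 1 ∨ lam ≤ (γ - 1) / (β - 1))
    (π : V → ℝ) (hπ : ∀ v, 0 < π v ∧ π v ≤ lam) (v : V) :
    (∑ σ : V → Bool, if σ v = false then
        β ^ ((Finset.univ.filter fun e : Sym2 V =>
              e ∈ G.edgeSet ∧ ∀ u ∈ e, σ u = false).card) *
          γ ^ ((Finset.univ.filter fun e : Sym2 V =>
              e ∈ G.edgeSet ∧ ∀ u ∈ e, σ u = true).card) *
          ∏ u ∈ Finset.univ.filter fun u => σ u = false, π u
      else 0) /
      (∑ σ : V → Bool,
        β ^ ((Finset.univ.filter fun e : Sym2 V =>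
              e ∈ G.edgeSet ∧ ∀ u ∈ e, σ u = false).card) *
          γ ^ ((Finset.univ.filter fun e : Sym2 V =>
              e ∈ G.edgeSet ∧ ∀ u ∈ e, σ u = true).card) *
          ∏ u ∈ Finset.univ.filter fun u => σ u = false, π u) ≤
      lam / (lam + 1) := by
  have hγ : 1 < γ := by nlinarith
  have hbm : lam * (β - 1) ≤ γ - 1 := by
    rcases hbound with h | h
    · rw [h]; norm_num; linarith
    · rcases eq_or_lt_of_le hβ with h1' | h1'
      · rw [← h1']; norm_num; linarith
      · rw [le_div_iff₀ (by linarith : (0:ℝ) < β - 1)] at h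
        linarith
  have hβ0 : (0:ℝ) < β := by linarith
  have hγ0 : (0:ℝ) < γ := by linarith
  have hπ' : ∀ u, 0 ≤ π u ∧ π u ≤ lam := fun u => ⟨le_of_lt (hπ u).1, (hπ u).2⟩
  have key := TwoSpinAux.weight_eq G β γ π
  simp only [key]
  rw [div_le_iff₀ (TwoSpinAux.Z_pos hβ0 hγ0 π (fun u => (hπ' u).1) _)]
  exact TwoSpinAux.main β γ lam hβ hle hγ hlam hbm _ _ rfl π hπ' v
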